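/- Let Γ = G *_φ H be the free product of groups G and H with amalgamated subgroups A ≤ G and B ≤ H with respect to an isomorphism φ : A → B. Let G′ ≤ G and H′ ≤ H be subgroups such that, setting A′ = G′ ∩ A and B′ = H′ ∩ B, one has φ(A′) = B′, and let Γ′ = ⟨G′, H′⟩ be the subgroup of Γ generated by the images of G′ and H′. Then, identifying G, H and their subgroups with their canonical images in Γ: Γ′ ∩ A = A′, Γ′ ∩ B = B′, Γ′ ∩ G = G′ and Γ′ ∩ H = H′. -/

import Mathlib

open Monoid

/-- The relator set `{a · φ(a)⁻¹ : a ∈ A}` identifying `A ≤ G` with `B ≤ H` inside the free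
product `G ∗ H`. -/
def amalgRels {G H : Type} [Group G] [Group H] (A : Subgroup G) (B : Subgroup H)
    (φ : A ≃* B) : Set (Coprod G H) :=
  {w | ∃ a : A, w = Coprod.inl (a : G) * (Coprod.inr ((φ a : H)))⁻¹}

/-- The free product `G ∗_φ H` of `G` and `H` with the subgroups `A ≤ G` and `B ≤ H` amalgamated
along the isomorphism `φ : A → B`, i.e. `⟨G, H | a = φ(a) for all a ∈ A⟩`. -/
abbrev Amalg {G H : Type} [Group G] [Group H] (A : Subgroup G) (B : Subgroup H)
    (φ : A ≃* B) : Type :=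
  Coprod G H ⧸ Subgroup.normalClosure (amalgRels A B φ)

/-- The canonical homomorphism `G →* G ∗_φ H`. -/
def Amalg.inlHom {G H : Type} [Group G] [Group H] (A : Subgroup G) (B : Subgroup H)
    (φ : A ≃* B) : G →* Amalg A B φ :=
  (QuotientGroup.mk' _).comp Coprod.inl

/-- The canonical homomorphism `H →* G ∗_φ H`. -/
def Amalg.inrHom {G H : Type} [Group G] [Group H] (A : Subgroup G) (B : Subgroup H)
    (φ : A ≃* B) : H →* Amalg A B φ :=
  (QuotientGroup.mk' _).comp Coprod.inr

namespace AmalgKey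

open Monoid.PushoutI Monoid.PushoutI.NormalWord Subgroup Function


variable {ι : Type} {Gf : ι → Type} [∀ i, Group (Gf i)] {Hb : Type} [Group Hb]
  {φ : ∀ i, Hb →* Gf i}

theorem exists_adapted_transversal (hφ : ∀ i, Injective (φ i)) (N : ∀ i, Subgroup (Gf i)) :
    ∃ d : Transversal φ, ∀ i g, g ∈ N i → (((d.compl i).equiv g).2 : Gf i) ∈ N i := by
  classical
  have key : ∀ i, ∃ f : Quotient (QuotientGroup.rightRel (φ i).range) → Gf i,
      (∀ q, Quotient.mk'' (f q) = q) ∧ f (Quotient.mk'' 1) = 1 ∧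
      ∀ g ∈ N i, f (Quotient.mk'' g) ∈ N i := by
    intro i
    refine ⟨fun q => if q = Quotient.mk'' (1 : Gf i) then 1
      else if h : ∃ n, n ∈ N i ∧ Quotient.mk'' n = q then h.choose else q.out, ?_, ?_, ?_⟩
    · intro q
      beta_reduce
      split_ifs with h1 h2
      · rw [h1]
      · exact h2.choose_spec.2
      · exact Quotient.out_eq' q
    · simp
    · intro g hg
      beta_reduce
      split_ifs with h1 h2
      · exact one_mem _
      · exact h2.choose_spec.1
      · exact absurd ⟨g, hg, rfl⟩ h2
  choose f hsec hone hmem using key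
  refine ⟨⟨hφ, fun i => Set.range (f i), fun i => ⟨_, hone i⟩,
      fun i => Subgroup.isComplement_range_right (hsec i)⟩, ?_⟩
  intro i g hg
  obtain ⟨q, hq⟩ := (((Subgroup.isComplement_range_right (hsec i)).equiv g).2).2
  have hmk : @Quotient.mk'' _ (QuotientGroup.rightRel (φ i).range)
        ((((Subgroup.isComplement_range_right (hsec i)).equiv g).2 : Gf i))
      = Quotient.mk'' g := by
    rw [Quotient.eq'']
    rw [QuotientGroup.rightRel_apply]
    have := ((Subgroup.isComplement_range_right (hsec i)).equiv g).1.2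
    rw [(Subgroup.isComplement_range_right (hsec i)).equiv_fst_eq_mul_inv g] at this
    exact this
  have hq2 : q = Quotient.mk'' g := by
    rw [← hmk, ← hq, hsec]
  rw [← hq, hq2]
  exact hmem i g hg


section
variable [DecidableEq ι] [∀ i, DecidableEq (Gf i)] {d : Transversal φ}

theorem cast_mem_of {N : ∀ i, Subgroup (Gf i)} {l : Σ j, Gf j} (hl : l.2 ∈ N l.1) {i : ι}
    (h : l.1 = i) : (h ▸ l.2 : Gf i) ∈ N i := by subst h; exact hl

theorem head_mem_of_letters {u : CoprodI.Word Gf} {N : ∀ i, Subgroup (Gf i)}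
    (hu : ∀ j g, (⟨j, g⟩ : Σ j, Gf j) ∈ u.toList → g ∈ N j) (i : ι) :
    (CoprodI.Word.equivPair i u).head ∈ N i := by
  rw [CoprodI.Word.equivPair_head]
  split_ifs with h
  · exact cast_mem_of (hu (u.toList.head h.fst).1 (u.toList.head h.fst).2
      (by rw [Sigma.eta]; exact List.head_mem _)) h.snd
  · exact one_mem _

theorem rcons_mem_W {N : ∀ i, Subgroup (Gf i)} {K : Subgroup Hb}
    (hadapt : ∀ i g, g ∈ N i → (((d.compl i).equiv g).2 : Gf i) ∈ N i)
    (hN : ∀ i, K.map (φ i) = N i ⊓ (φ i).range)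
    {i : ι} {q : Pair d i} (hqh : q.head ∈ N i)
    (hqt : ∀ j g, (⟨j, g⟩ : Σ j, Gf j) ∈ q.tail.toList → g ∈ N j) :
    (rcons i q).head ∈ K ∧
      ∀ j g, (⟨j, g⟩ : Σ j, Gf j) ∈ (rcons i q).toList → g ∈ N j := by
  have hs : (((d.compl i).equiv q.head).2 : Gf i) ∈ N i := hadapt i _ hqh
  have hf : (((d.compl i).equiv q.head).1 : Gf i) ∈ N i ⊓ (φ i).range := by
    rw [Subgroup.mem_inf]
    constructor
    · rw [(d.compl i).equiv_fst_eq_mul_inv]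
      exact mul_mem hqh (inv_mem hs)
    · exact (((d.compl i).equiv q.head).1).2
  have hlist : (rcons i q).toWord =
      CoprodI.Word.rcons ⟨(((d.compl i).equiv q.head).2 : Gf i), q.tail, q.fstIdx_ne⟩ := by
    show (CoprodI.Word.equivPair i).symm _ = _
    rw [CoprodI.Word.equivPair_symm]
  constructor
  · rw [← hN i] at hf
    obtain ⟨k, hk, hφk⟩ := hf
    have h3 : φ i ((rcons i q).head) = (((d.compl i).equiv q.head).1 : Gf i) :=
      MonoidHom.apply_ofInjective_symm _ _
    have h4 : (rcons i q).head = k := (d.injective i) (by rw [h3, ← hφk])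
    rw [h4]; exact hk
  · intro j g hg
    rw [hlist, CoprodI.Word.mem_rcons_iff] at hg
    rcases hg with hg | ⟨hg1, hij, hgeq⟩
    · exact hqt j g hg
    · subst hij
      exact hgeq ▸ hs

theorem smul_mem_W {N : ∀ i, Subgroup (Gf i)} {K : Subgroup Hb}
    (hadapt : ∀ i g, g ∈ N i → (((d.compl i).equiv g).2 : Gf i) ∈ N i)
    (hN : ∀ i, K.map (φ i) = N i ⊓ (φ i).range)
    {i : ι} {n : Gf i} (hn : n ∈ N i) {w : NormalWord d}
    (hw1 : w.head ∈ K)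
    (hw2 : ∀ j g, (⟨j, g⟩ : Σ j, Gf j) ∈ w.toList → g ∈ N j) :
    (of (φ := φ) i n • w).head ∈ K ∧
      ∀ j g, (⟨j, g⟩ : Σ j, Gf j) ∈ (of (φ := φ) i n • w).toList → g ∈ N j := by
  have hph : (equivPair i w).head ∈ N i := by
    have h1 : (equivPair i w).head
        = φ i w.head * (CoprodI.Word.equivPair i w.toWord).head := by
      show (CoprodI.Word.equivPair i (CoprodI.of (φ i w.head) • w.toWord)).head = _
      rw [CoprodI.Word.equivPair_smul_same]
    rw [h1]
    refine mul_mem ?_ (head_mem_of_letters hw2 i)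
    have h2 : φ i w.head ∈ K.map (φ i) := ⟨w.head, hw1, rfl⟩
    rw [hN i] at h2; exact h2.1
  have hpt : ∀ j g, (⟨j, g⟩ : Σ j, Gf j) ∈ (equivPair i w).tail.toList → g ∈ N j := by
    intro j g hg
    have h1 : (equivPair i w).tail = (CoprodI.Word.equivPair i w.toWord).tail := by
      show (CoprodI.Word.equivPair i (CoprodI.of (φ i w.head) • w.toWord)).tail = _
      rw [CoprodI.Word.equivPair_smul_same]
    rw [h1] at hg
    exact hw2 j g (CoprodI.Word.mem_of_mem_equivPair_tail _ hg)
  rw [summand_smul_def]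
  exact rcons_mem_W hadapt hN (mul_mem hn hph) hpt

end

theorem key (hφ : ∀ i, Injective (φ i)) (N : ∀ i, Subgroup (Gf i)) (K : Subgroup Hb)
    (hN : ∀ i, K.map (φ i) = N i ⊓ (φ i).range) (j : ι) :
    (⨆ i, (N i).map (of (φ := φ) i)) ⊓ (of (φ := φ) j).range
      = (N j).map (of (φ := φ) j) := by
  classical
  obtain ⟨d, hadapt⟩ := exists_adapted_transversal hφ N
  apply le_antisymm
  · rintro x ⟨hxΓ, g, rfl⟩
    refine ⟨g, ?_, rfl⟩
    set W : NormalWord d → Prop := fun w => w.head ∈ K ∧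
      ∀ j g, (⟨j, g⟩ : Σ j, Gf j) ∈ w.toList → g ∈ N j with hWdef
    let S : Subgroup (PushoutI φ) :=
      { carrier := {x | (∀ w, W w → W (x • w)) ∧ ∀ w, W w → W (x⁻¹ • w)}
        one_mem' := by constructor <;> intro w hw <;> simpa using hw
        mul_mem' := fun {a b} ha hb => by
          constructor
          · intro w hw; rw [mul_smul]; exact ha.1 _ (hb.1 _ hw)
          · intro w hw; rw [mul_inv_rev, mul_smul]; exact hb.2 _ (ha.2 _ hw)
        inv_mem' := fun {a} ha => ⟨ha.2, by intro w hw; rw [inv_inv]; exact ha.1 _ hw⟩ }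
    have hgen : (⨆ i, (N i).map (of (φ := φ) i)) ≤ S := by
      refine iSup_le fun i => ?_
      rintro _ ⟨n, hn, rfl⟩
      constructor
      · intro w hw; exact smul_mem_W hadapt hN hn hw.1 hw.2
      · intro w hw; rw [← map_inv]; exact smul_mem_W hadapt hN (inv_mem hn) hw.1 hw.2
    have hempty : W NormalWord.empty := by
      constructor
      · exact one_mem K
      · intro k l hl
        simp [NormalWord.empty, CoprodI.Word.empty] at hl
    have hW0 : W (of (φ := φ) j g • NormalWord.empty) := (hgen hxΓ).1 _ hempty
    let q : Pair d j := ⟨⟨g, CoprodI.Word.empty,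
        by simp [CoprodI.Word.fstIdx, CoprodI.Word.empty]⟩,
      by intro k l hl; simp [CoprodI.Word.empty] at hl⟩
    have hlist : (rcons j q).toWord =
        CoprodI.Word.rcons ⟨(((d.compl j).equiv q.head).2 : Gf j), q.tail, q.fstIdx_ne⟩ := by
      show (CoprodI.Word.equivPair j).symm _ = _
      rw [CoprodI.Word.equivPair_symm]
    have hprod : (rcons j q).prod = of (φ := φ) j g := by
      show base φ ((rcons j q).head) * ofCoprodI ((rcons j q).toWord).prod = _
      rw [hlist, CoprodI.Word.prod_rcons]
      have h1 : (rcons j q).head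
          = (MonoidHom.ofInjective (d.injective j)).symm ((d.compl j).equiv q.head).1 := rfl
      rw [h1, ← of_apply_eq_base φ j, MonoidHom.apply_ofInjective_symm, map_mul, ofCoprodI_of]
      have h2 : (CoprodI.Word.empty : CoprodI.Word Gf).prod = 1 := by
        simp [CoprodI.Word.prod, CoprodI.Word.empty]
      show _ * (_ * ofCoprodI (CoprodI.Word.empty : CoprodI.Word Gf).prod) = _
      rw [h2, map_one, mul_one, ← map_mul, (d.compl j).equiv_fst_mul_equiv_snd]
    have hw1 : of (φ := φ) j g • NormalWord.empty = rcons j q := by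
      apply prod_injective
      rw [prod_smul, prod_empty, mul_one, hprod]
    rw [hw1] at hW0
    obtain ⟨hhead, hletters⟩ := hW0
    have hs : (((d.compl j).equiv q.head).2 : Gf j) ∈ N j := by
      by_cases h1 : (((d.compl j).equiv q.head).2 : Gf j) = 1
      · rw [h1]; exact one_mem _
      · refine hletters j _ ?_
        rw [hlist, CoprodI.Word.mem_rcons_iff]
        exact Or.inr ⟨h1, rfl, rfl⟩
    have hf : (((d.compl j).equiv q.head).1 : Gf j) ∈ N j := by
      have h3 : φ j ((rcons j q).head) = (((d.compl j).equiv q.head).1 : Gf j) :=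
        MonoidHom.apply_ofInjective_symm _ _
      have h4 : φ j ((rcons j q).head) ∈ K.map (φ j) := ⟨_, hhead, rfl⟩
      rw [hN j, h3] at h4
      exact h4.1
    have h5 := mul_mem hf hs
    rwa [(d.compl j).equiv_fst_mul_equiv_snd q.head] at h5
  · rintro x ⟨n, hn, rfl⟩
    exact ⟨Subgroup.mem_iSup_of_mem j ⟨n, hn, rfl⟩, ⟨n, rfl⟩⟩

end AmalgKey

namespace AmalgMain

open Monoid Subgroup Function


variable {G H : Type} [Group G] [Group H]

@[reducible] def fam (G H : Type) : Bool → Type := fun b => Bool.rec H G b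

@[reducible] instance famGroup {G H : Type} [Group G] [Group H] : ∀ b, Group (fam G H b) :=
  fun b => Bool.rec (inferInstanceAs (Group H)) (inferInstanceAs (Group G)) b

@[reducible] def ψ (A : Subgroup G) (B : Subgroup H) (φ : A ≃* B) : ∀ b, ↥A →* fam G H b :=
  fun b => Bool.rec (motive := fun b => ↥A →* fam G H b)
    (B.subtype.comp φ.toMonoidHom) A.subtype b

theorem ψ_injective (A : Subgroup G) (B : Subgroup H) (φ : A ≃* B) :
    ∀ b, Function.Injective (ψ A B φ b) := by
  intro b
  cases b
  · exact B.subtype_injective.comp φ.injective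
  · exact A.subtype_injective

variable (A : Subgroup G) (B : Subgroup H) (φ : A ≃* B)

def toPush : Amalg A B φ →* PushoutI (ψ A B φ) :=
  QuotientGroup.lift _
    (Coprod.lift (PushoutI.of (φ := ψ A B φ) true) (PushoutI.of (φ := ψ A B φ) false))
    (by
      have h : amalgRels A B φ ⊆
          ((Coprod.lift (PushoutI.of (φ := ψ A B φ) true)
            (PushoutI.of (φ := ψ A B φ) false)).ker : Set (Coprod G H)) := by
        rintro _ ⟨a, rfl⟩
        rw [SetLike.mem_coe, MonoidHom.mem_ker, map_mul, map_inv, Coprod.lift_apply_inl,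
          Coprod.lift_apply_inr]
        rw [show (PushoutI.of (φ := ψ A B φ) true) (a : G)
              = PushoutI.of true (ψ A B φ true a) from rfl,
            show (PushoutI.of (φ := ψ A B φ) false) ((φ a : H))
              = PushoutI.of false (ψ A B φ false a) from rfl,
            PushoutI.of_apply_eq_base, PushoutI.of_apply_eq_base, mul_inv_cancel]
      exact Subgroup.normalClosure_le_normal h)

def ofPush : PushoutI (ψ A B φ) →* Amalg A B φ :=
  Monoid.PushoutI.lift
    (fun b => Bool.rec (motive := fun b => fam G H b →* Amalg A B φ)
      (Amalg.inrHom A B φ) (Amalg.inlHom A B φ) b)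
    ((Amalg.inlHom A B φ).comp A.subtype)
    (by
      intro b
      cases b
      · ext a
        show Amalg.inrHom A B φ ((φ a : H)) = Amalg.inlHom A B φ (a : G)
        rw [Amalg.inrHom, Amalg.inlHom, MonoidHom.comp_apply, MonoidHom.comp_apply,
          QuotientGroup.mk'_eq_mk']
        have hrel := Subgroup.normalClosure_normal.conj_mem _
          (Subgroup.subset_normalClosure
            (show _ ∈ amalgRels A B φ from ⟨a, rfl⟩)) ((Coprod.inr (φ a : H))⁻¹)
        refine ⟨_, hrel, ?_⟩
        group
      · rfl)

theorem toPush_inlHom (g : G) :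
    toPush A B φ (Amalg.inlHom A B φ g) = PushoutI.of (φ := ψ A B φ) true g := rfl

theorem toPush_inrHom (h : H) :
    toPush A B φ (Amalg.inrHom A B φ h) = PushoutI.of (φ := ψ A B φ) false h := rfl

theorem ofPush_of_true (g : G) :
    ofPush A B φ (PushoutI.of (φ := ψ A B φ) true g) = Amalg.inlHom A B φ g := by
  rw [ofPush, Monoid.PushoutI.lift_of]

theorem ofPush_of_false (h : H) :
    ofPush A B φ (PushoutI.of (φ := ψ A B φ) false h) = Amalg.inrHom A B φ h := by
  rw [ofPush, Monoid.PushoutI.lift_of]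

def iso : Amalg A B φ ≃* PushoutI (ψ A B φ) :=
  MonoidHom.toMulEquiv (toPush A B φ) (ofPush A B φ)
    (by
      apply QuotientGroup.monoidHom_ext
      apply Coprod.hom_ext
      · ext g
        show ofPush A B φ (toPush A B φ (Amalg.inlHom A B φ g)) = Amalg.inlHom A B φ g
        rw [toPush_inlHom, ofPush_of_true]
      · ext h
        show ofPush A B φ (toPush A B φ (Amalg.inrHom A B φ h)) = Amalg.inrHom A B φ h
        rw [toPush_inrHom, ofPush_of_false])
    (by
      apply Monoid.PushoutI.hom_ext_nonempty
      intro b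
      cases b
      · ext h
        show toPush A B φ (ofPush A B φ (PushoutI.of (φ := ψ A B φ) false h))
          = PushoutI.of (φ := ψ A B φ) false h
        rw [ofPush_of_false, toPush_inrHom]
      · ext g
        show toPush A B φ (ofPush A B φ (PushoutI.of (φ := ψ A B φ) true g))
          = PushoutI.of (φ := ψ A B φ) true g
        rw [ofPush_of_true, toPush_inlHom])

end AmalgMain

/-- **Lemma (subgroups of amalgamated products), parts (2) and (3).**  Let `Γ = G ∗_φ H` with
amalgamated subgroups `A ≤ G`, `B ≤ H` along `φ : A ≃ B`.  Let `G′ ≤ G` and `H′ ≤ H` be subgroups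
such that `φ(A′) = B′`, where `A′ = G′ ∩ A` and `B′ = H′ ∩ B`, and let `Γ′ = ⟨G′, H′⟩ ≤ Γ`.
Then, identifying `G`, `H` and their subgroups with their canonical images in `Γ`:
`Γ′ ∩ A = A′`, `Γ′ ∩ B = B′`, `Γ′ ∩ G = G′` and `Γ′ ∩ H = H′`. -/
theorem amalg_subgroup_intersections {G H : Type} [Group G] [Group H]
    (A : Subgroup G) (B : Subgroup H) (φ : A ≃* B)
    (G' : Subgroup G) (H' : Subgroup H)
    (hφ : Subgroup.map (B.subtype.comp φ.toMonoidHom) ((G' ⊓ A).subgroupOf A)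
      = H' ⊓ B) :
    ((G'.map (Amalg.inlHom A B φ) ⊔ H'.map (Amalg.inrHom A B φ))
        ⊓ A.map (Amalg.inlHom A B φ) = (G' ⊓ A).map (Amalg.inlHom A B φ)) ∧
    ((G'.map (Amalg.inlHom A B φ) ⊔ H'.map (Amalg.inrHom A B φ))
        ⊓ B.map (Amalg.inrHom A B φ) = (H' ⊓ B).map (Amalg.inrHom A B φ)) ∧
    ((G'.map (Amalg.inlHom A B φ) ⊔ H'.map (Amalg.inrHom A B φ))
        ⊓ (Amalg.inlHom A B φ).range = G'.map (Amalg.inlHom A B φ)) ∧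
    ((G'.map (Amalg.inlHom A B φ) ⊔ H'.map (Amalg.inrHom A B φ))
        ⊓ (Amalg.inrHom A B φ).range = H'.map (Amalg.inrHom A B φ)) := by

  classical
  have hψinj := AmalgMain.ψ_injective A B φ
  let Nf : ∀ b, Subgroup (AmalgMain.fam G H b) :=
    fun b => Bool.rec (motive := fun b => Subgroup (AmalgMain.fam G H b)) H' G' b
  have hNcond : ∀ b, ((G' ⊓ A).subgroupOf A).map (AmalgMain.ψ A B φ b)
      = Nf b ⊓ (AmalgMain.ψ A B φ b).range := by
    intro b
    cases b
    · show ((G' ⊓ A).subgroupOf A).map (B.subtype.comp φ.toMonoidHom)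
        = H' ⊓ (B.subtype.comp φ.toMonoidHom).range
      rw [hφ]
      congr 1
      rw [MonoidHom.range_comp, MonoidHom.range_eq_top.mpr φ.surjective,
        ← MonoidHom.range_eq_map, Subgroup.range_subtype]
    · show ((G' ⊓ A).subgroupOf A).map A.subtype = G' ⊓ A.subtype.range
      rw [Subgroup.subgroupOf_map_subtype, Subgroup.range_subtype, inf_assoc, inf_idem]
  have hkey := AmalgKey.key hψinj Nf ((G' ⊓ A).subgroupOf A) hNcond
  have hsup : (⨆ b, (Nf b).map (Monoid.PushoutI.of (φ := AmalgMain.ψ A B φ) b))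
      = G'.map (Monoid.PushoutI.of (φ := AmalgMain.ψ A B φ) true)
        ⊔ H'.map (Monoid.PushoutI.of (φ := AmalgMain.ψ A B φ) false) := iSup_bool_eq
  have P3 : (G'.map (Monoid.PushoutI.of (φ := AmalgMain.ψ A B φ) true)
        ⊔ H'.map (Monoid.PushoutI.of (φ := AmalgMain.ψ A B φ) false))
      ⊓ (Monoid.PushoutI.of (φ := AmalgMain.ψ A B φ) true).range
      = G'.map (Monoid.PushoutI.of (φ := AmalgMain.ψ A B φ) true) := by
    rw [← hsup]; exact hkey true
  have P4 : (G'.map (Monoid.PushoutI.of (φ := AmalgMain.ψ A B φ) true)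
        ⊔ H'.map (Monoid.PushoutI.of (φ := AmalgMain.ψ A B φ) false))
      ⊓ (Monoid.PushoutI.of (φ := AmalgMain.ψ A B φ) false).range
      = H'.map (Monoid.PushoutI.of (φ := AmalgMain.ψ A B φ) false) := by
    rw [← hsup]; exact hkey false
  have hoinjT : Function.Injective (Monoid.PushoutI.of (φ := AmalgMain.ψ A B φ) true) :=
    Monoid.PushoutI.of_injective hψinj true
  have hoinjF : Function.Injective (Monoid.PushoutI.of (φ := AmalgMain.ψ A B φ) false) :=
    Monoid.PushoutI.of_injective hψinj false
  have P1 : (G'.map (Monoid.PushoutI.of (φ := AmalgMain.ψ A B φ) true)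
        ⊔ H'.map (Monoid.PushoutI.of (φ := AmalgMain.ψ A B φ) false))
      ⊓ A.map (Monoid.PushoutI.of (φ := AmalgMain.ψ A B φ) true)
      = (G' ⊓ A).map (Monoid.PushoutI.of (φ := AmalgMain.ψ A B φ) true) := by
    have hle : A.map (Monoid.PushoutI.of (φ := AmalgMain.ψ A B φ) true)
        ≤ (Monoid.PushoutI.of (φ := AmalgMain.ψ A B φ) true).range :=
      Subgroup.map_le_range _ _
    rw [show (G'.map (Monoid.PushoutI.of (φ := AmalgMain.ψ A B φ) true)
        ⊔ H'.map (Monoid.PushoutI.of (φ := AmalgMain.ψ A B φ) false))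
      ⊓ A.map (Monoid.PushoutI.of (φ := AmalgMain.ψ A B φ) true)
      = ((G'.map (Monoid.PushoutI.of (φ := AmalgMain.ψ A B φ) true)
        ⊔ H'.map (Monoid.PushoutI.of (φ := AmalgMain.ψ A B φ) false))
      ⊓ (Monoid.PushoutI.of (φ := AmalgMain.ψ A B φ) true).range)
      ⊓ A.map (Monoid.PushoutI.of (φ := AmalgMain.ψ A B φ) true) from by
        rw [inf_assoc, inf_eq_right.mpr hle]]
    rw [P3]
    exact (Subgroup.map_inf _ _ _ hoinjT).symm
  have P2 : (G'.map (Monoid.PushoutI.of (φ := AmalgMain.ψ A B φ) true)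
        ⊔ H'.map (Monoid.PushoutI.of (φ := AmalgMain.ψ A B φ) false))
      ⊓ B.map (Monoid.PushoutI.of (φ := AmalgMain.ψ A B φ) false)
      = (H' ⊓ B).map (Monoid.PushoutI.of (φ := AmalgMain.ψ A B φ) false) := by
    have hle : B.map (Monoid.PushoutI.of (φ := AmalgMain.ψ A B φ) false)
        ≤ (Monoid.PushoutI.of (φ := AmalgMain.ψ A B φ) false).range :=
      Subgroup.map_le_range _ _
    rw [show (G'.map (Monoid.PushoutI.of (φ := AmalgMain.ψ A B φ) true)
        ⊔ H'.map (Monoid.PushoutI.of (φ := AmalgMain.ψ A B φ) false))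
      ⊓ B.map (Monoid.PushoutI.of (φ := AmalgMain.ψ A B φ) false)
      = ((G'.map (Monoid.PushoutI.of (φ := AmalgMain.ψ A B φ) true)
        ⊔ H'.map (Monoid.PushoutI.of (φ := AmalgMain.ψ A B φ) false))
      ⊓ (Monoid.PushoutI.of (φ := AmalgMain.ψ A B φ) false).range)
      ⊓ B.map (Monoid.PushoutI.of (φ := AmalgMain.ψ A B φ) false) from by
        rw [inf_assoc, inf_eq_right.mpr hle]]
    rw [P4]
    exact (Subgroup.map_inf _ _ _ hoinjF).symm
  have hinj : Function.Injective (AmalgMain.toPush A B φ) := (AmalgMain.iso A B φ).injective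
  have hc1 : (AmalgMain.toPush A B φ).comp (Amalg.inlHom A B φ)
      = Monoid.PushoutI.of (φ := AmalgMain.ψ A B φ) true :=
    MonoidHom.ext fun g => AmalgMain.toPush_inlHom A B φ g
  have hc2 : (AmalgMain.toPush A B φ).comp (Amalg.inrHom A B φ)
      = Monoid.PushoutI.of (φ := AmalgMain.ψ A B φ) false :=
    MonoidHom.ext fun h => AmalgMain.toPush_inrHom A B φ h
  refine ⟨?_, ?_, ?_, ?_⟩
  · apply Subgroup.map_injective hinj
    rw [Subgroup.map_inf _ _ _ hinj, Subgroup.map_sup]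
    simp only [Subgroup.map_map, hc1, hc2]
    exact P1
  · apply Subgroup.map_injective hinj
    rw [Subgroup.map_inf _ _ _ hinj, Subgroup.map_sup]
    simp only [Subgroup.map_map, hc1, hc2]
    exact P2
  · apply Subgroup.map_injective hinj
    rw [Subgroup.map_inf _ _ _ hinj, Subgroup.map_sup]
    simp only [Subgroup.map_map, ← MonoidHom.range_comp, hc1, hc2]
    exact P3
  · apply Subgroup.map_injective hinj
    rw [Subgroup.map_inf _ _ _ hinj, Subgroup.map_sup]
    simp only [Subgroup.map_map, ← MonoidHom.range_comp, hc1, hc2]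
    exact P4
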